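/- Let $\xi$ be a pmf on $\{1, \ldots, L\}$ with $\xi(1) < 1$, and define $q_\xi(\ell') = \xi(\ell'+1)/(1-\xi(1))$ for $1 \le \ell' \le L-1$ (and $q_\xi(L)=0$). Then the mean-centered partial derivative of $q_\xi(\ell')$ with respect to $\xi(\ell)$ equals $\frac{\mathbf{1}(\ell > 1)}{1-\xi(1)} \left[ \mathbf{1}(\ell = \ell' + 1) - q_\xi(\ell') \right]$. -/

import Mathlib

open scoped BigOperators
open Fin.NatCast

/-- Mean-centered partial derivative of the shifted-and-renormalized
remaining-service-duration pmf `q_ξ(ℓ') = ξ(ℓ'+1)/(1-ξ(1))` (for `ℓ'+1 ≤ L`,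
and `q_ξ(L) = 0`):
`∂^ctrd q_ξ(ℓ')/∂ξ(ℓ) = 𝟙(ℓ>1)/(1-ξ(1)) ⬝ (𝟙(ℓ=ℓ'+1) - q_ξ(ℓ'))`. -/
theorem shifted_pmf_centered_deriv (L : ℕ) (hL : 1 ≤ L)
    (ξ : Fin (L + 1) → ℝ)
    (hnn : ∀ i, 0 ≤ ξ i)
    (hsum : ∑ i ∈ Finset.Icc 1 L, ξ ((i : ℕ) : Fin (L + 1)) = 1)
    (h1 : ξ ((1 : ℕ) : Fin (L + 1)) < 1)
    (q : (Fin (L + 1) → ℝ) → ℕ → ℝ)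
    (hq : ∀ ν ℓ', q ν ℓ' =
      if ℓ' + 1 ≤ L then ν ((ℓ' + 1 : ℕ) : Fin (L + 1)) / (1 - ν ((1 : ℕ) : Fin (L + 1)))
      else 0)
    (ℓ ℓ' : ℕ) (hℓ : ℓ ∈ Finset.Icc 1 L) (hℓ' : ℓ' ∈ Finset.Icc 1 L) :
    fderiv ℝ (fun ν => q ν ℓ') ξ (Pi.single ((ℓ : ℕ) : Fin (L + 1)) 1)
        - ∑ ℓt ∈ Finset.Icc 1 L, ξ ((ℓt : ℕ) : Fin (L + 1)) *
            fderiv ℝ (fun ν => q ν ℓ') ξ (Pi.single ((ℓt : ℕ) : Fin (L + 1)) 1)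
      = (if 1 < ℓ then 1 else 0) / (1 - ξ ((1 : ℕ) : Fin (L + 1))) *
          ((if ℓ = ℓ' + 1 then 1 else 0) - q ξ ℓ') := by
  simp only [Finset.mem_Icc] at hℓ hℓ'
  obtain ⟨hℓ1, hℓL⟩ := hℓ
  obtain ⟨hℓ'1, hℓ'L⟩ := hℓ'
  have hcast : ∀ m n : ℕ, m ≤ L → n ≤ L →
      (((m : ℕ) : Fin (L + 1)) = ((n : ℕ) : Fin (L + 1)) ↔ m = n) := by
    intro m n hm hn
    rw [Fin.ext_iff, Fin.val_natCast, Fin.val_natCast,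
      Nat.mod_eq_of_lt (by omega), Nat.mod_eq_of_lt (by omega)]
  by_cases hcase : ℓ' + 1 ≤ L
  · -- main case
    set a : Fin (L + 1) := ((ℓ' + 1 : ℕ) : Fin (L + 1)) with ha
    set b : Fin (L + 1) := ((1 : ℕ) : Fin (L + 1)) with hb
    have hs : (1 : ℝ) - ξ b ≠ 0 := ne_of_gt (by linarith)
    have hfun : (fun ν : Fin (L + 1) → ℝ => q ν ℓ') = fun ν => ν a / (1 - ν b) := by
      funext ν; rw [hq, if_pos hcase]
    have hc : HasFDerivAt (𝕜 := ℝ) (fun ν : Fin (L + 1) → ℝ => ν a)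
        (ContinuousLinearMap.proj a) ξ := hasFDerivAt_apply (𝕜 := ℝ) a ξ
    have hd : HasFDerivAt (𝕜 := ℝ) (fun ν : Fin (L + 1) → ℝ => 1 - ν b)
        ((0 : (Fin (L + 1) → ℝ) →L[ℝ] ℝ) - ContinuousLinearMap.proj b) ξ :=
      (hasFDerivAt_const 1 ξ).sub (hasFDerivAt_apply (𝕜 := ℝ) b ξ)
    have hinv : HasFDerivAt (𝕜 := ℝ) (fun ν : Fin (L + 1) → ℝ => (1 - ν b)⁻¹)
        ((-((1 - ξ b) ^ 2)⁻¹) • ((0 : (Fin (L + 1) → ℝ) →L[ℝ] ℝ)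
          - ContinuousLinearMap.proj b)) ξ :=
      (hasDerivAt_inv hs).comp_hasFDerivAt ξ hd
    have hdiv : HasFDerivAt (𝕜 := ℝ) (fun ν : Fin (L + 1) → ℝ => ν a / (1 - ν b))
        (ξ a • ((-((1 - ξ b) ^ 2)⁻¹) • ((0 : (Fin (L + 1) → ℝ) →L[ℝ] ℝ)
            - ContinuousLinearMap.proj b))
          + (1 - ξ b)⁻¹ • ContinuousLinearMap.proj a) ξ := by
      simp only [div_eq_mul_inv]
      exact hc.mul hinv
    have hF : fderiv ℝ (fun ν => q ν ℓ') ξ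
        = ξ a • ((-((1 - ξ b) ^ 2)⁻¹) • ((0 : (Fin (L + 1) → ℝ) →L[ℝ] ℝ)
            - ContinuousLinearMap.proj b))
          + (1 - ξ b)⁻¹ • ContinuousLinearMap.proj a := by
      rw [hfun]; exact hdiv.fderiv
    have heval : ∀ m : ℕ, 1 ≤ m → m ≤ L →
        fderiv ℝ (fun ν => q ν ℓ') ξ (Pi.single ((m : ℕ) : Fin (L + 1)) 1)
          = (if m = ℓ' + 1 then 1 else 0) / (1 - ξ b)
            + ξ a * (if m = 1 then 1 else 0) / (1 - ξ b) ^ 2 := by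
      intro m hm1 hmL
      have e1 : (a = ((m : ℕ) : Fin (L + 1))) ↔ ℓ' + 1 = m := hcast _ _ (by omega) hmL
      have e2 : (b = ((m : ℕ) : Fin (L + 1))) ↔ 1 = m := hcast _ _ (by omega) hmL
      rw [hF]
      simp only [ContinuousLinearMap.add_apply, ContinuousLinearMap.sub_apply,
        ContinuousLinearMap.smul_apply, ContinuousLinearMap.zero_apply,
        ContinuousLinearMap.proj_apply, Pi.single_apply, smul_eq_mul, e1, e2]
      by_cases h1m : ℓ' + 1 = m
      · have h1m' : m = ℓ' + 1 := h1m.symm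
        have h2m : ¬ ((1 : ℕ) = m) := by omega
        have h2m' : ¬ (m = 1) := by omega
        rw [if_pos h1m, if_neg h2m, if_pos h1m', if_neg h2m']
        field_simp
        ring
      · have h1m' : ¬ (m = ℓ' + 1) := fun h => h1m h.symm
        by_cases h2m : (1 : ℕ) = m
        · have h2m' : m = 1 := h2m.symm
          rw [if_neg h1m, if_pos h2m, if_neg h1m', if_pos h2m']
          field_simp
          ring
        · have h2m' : ¬ (m = 1) := fun h => h2m h.symm
          rw [if_neg h1m, if_neg h2m, if_neg h1m', if_neg h2m']
          field_simp
          ring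
    have hsum2 : ∑ ℓt ∈ Finset.Icc 1 L, ξ ((ℓt : ℕ) : Fin (L + 1)) *
          fderiv ℝ (fun ν => q ν ℓ') ξ (Pi.single ((ℓt : ℕ) : Fin (L + 1)) 1)
        = ξ a / (1 - ξ b) + ξ b * ξ a / (1 - ξ b) ^ 2 := by
      rw [Finset.sum_congr rfl (fun ℓt ht => by
        rw [heval ℓt (Finset.mem_Icc.mp ht).1 (Finset.mem_Icc.mp ht).2])]
      simp only [mul_add, mul_ite, mul_one, mul_zero, ite_div, zero_div,
        mul_div_assoc]
      rw [Finset.sum_add_distrib, Finset.sum_ite_eq' (Finset.Icc 1 L),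
        Finset.sum_ite_eq' (Finset.Icc 1 L)]
      simp only [Finset.mem_Icc]
      rw [if_pos ⟨by omega, hcase⟩, if_pos ⟨le_rfl, hL⟩]
      ring
    rw [hsum2, heval ℓ hℓ1 hℓL, hq, if_pos hcase, ← ha]
    rcases Nat.lt_or_ge 1 ℓ with hℓ2 | hℓ2
    · have hne1 : ℓ ≠ 1 := by omega
      rw [if_pos hℓ2, if_neg hne1]
      by_cases he : ℓ = ℓ' + 1
      · rw [if_pos he]
        field_simp
        ring
      · rw [if_neg he]
        field_simp
        ring
    · have hℓeq : ℓ = 1 := by omega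
      have hne : ¬ (ℓ = ℓ' + 1) := by omega
      have hne2 : ¬ (1 < ℓ) := by omega
      rw [if_neg hne, if_pos hℓeq, if_neg hne2]
      field_simp
      ring
  · -- degenerate case: q · ℓ' ≡ 0
    have hfun : (fun ν : Fin (L + 1) → ℝ => q ν ℓ') = fun _ => (0 : ℝ) := by
      funext ν; rw [hq, if_neg hcase]
    have hne : ℓ ≠ ℓ' + 1 := by omega
    rw [hfun, hq, if_neg hcase]
    simp [hne]
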